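/- Let Λ be a strongly connected finite k-graph. Then Λ is aperiodic if and only if Per Λ = {0}. -/

import Mathlib

/-- A higher-rank graph (`k`-graph): a countable category with a degree functor
`d : Λ → ℕ^k` satisfying the unique factorisation property.  Morphisms are called
paths; the vertices are the paths of degree `0` (the identity morphisms).
`r` and `s` are the codomain (range) and domain (source) maps.  By convention
`Λ^{e_i} ≠ ∅` for each standard generator `e_i` of `ℕ^k`. -/
structure KGraph (k : ℕ) where
  Path : Type
  countable : Countable Path
  d : Path → Fin k → ℕ
  r : Path → Path
  s : Path → Path
  d_r : ∀ lam, d (r lam) = 0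
  d_s : ∀ lam, d (s lam) = 0
  r_vertex : ∀ v, d v = 0 → r v = v
  s_vertex : ∀ v, d v = 0 → s v = v
  comp : ∀ μ ν : Path, s μ = r ν → Path
  r_comp : ∀ μ ν h, r (comp μ ν h) = r μ
  s_comp : ∀ μ ν h, s (comp μ ν h) = s ν
  d_comp : ∀ μ ν h, d (comp μ ν h) = d μ + d ν
  id_comp : ∀ lam (h : s (r lam) = r lam), comp (r lam) lam h = lam
  comp_id : ∀ lam (h : s lam = r (s lam)), comp lam (s lam) h = lam
  assoc : ∀ μ ν τ (h1 : s μ = r ν) (h2 : s ν = r τ)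
      (h3 : s (comp μ ν h1) = r τ) (h4 : s μ = r (comp ν τ h2)),
      comp (comp μ ν h1) τ h3 = comp μ (comp ν τ h2) h4
  factor : ∀ (lam : Path) (m n : Fin k → ℕ), d lam = m + n →
      ∃! μν : Path × Path, ∃ h : s μν.1 = r μν.2,
        d μν.1 = m ∧ d μν.2 = n ∧ comp μν.1 μν.2 h = lam
  edge_nonempty : ∀ i : Fin k, ∃ lam, d lam = Pi.single i 1

namespace KGraph

variable {k : ℕ}

/-- The vertices of a `k`-graph: the paths of degree `0`. -/
abbrev Vertex (Λ : KGraph k) : Type := {v : Λ.Path // Λ.d v = 0}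

/-- A `k`-graph is finite if `Λ^n` is finite for every `n ∈ ℕ^k`. -/
def IsFinite (Λ : KGraph k) : Prop := ∀ n : Fin k → ℕ, {lam : Λ.Path | Λ.d lam = n}.Finite

/-- A `k`-graph is strongly connected if `vΛw ≠ ∅` for all vertices `v, w`. -/
def StronglyConnected (Λ : KGraph k) : Prop :=
  ∀ v w : Λ.Path, Λ.d v = 0 → Λ.d w = 0 → ∃ lam : Λ.Path, Λ.r lam = v ∧ Λ.s lam = w

/-- `Λ^min(μ,ν) = {(α,β) : μα = νβ, d(μα) = d(μ) ∨ d(ν)}`. -/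
def minSet (Λ : KGraph k) (μ ν : Λ.Path) : Set (Λ.Path × Λ.Path) :=
  {p | ∃ (h1 : Λ.s μ = Λ.r p.1) (h2 : Λ.s ν = Λ.r p.2),
      Λ.comp μ p.1 h1 = Λ.comp ν p.2 h2 ∧ Λ.d μ + Λ.d p.1 = Λ.d μ ⊔ Λ.d ν}

end KGraph

/-- An infinite path in a `k`-graph `Λ`: a degree-preserving functor `x : Ω_k → Λ`,
recorded by its values `x(m,n)` for `m ≤ n` in `ℕ^k`. -/
structure InfinitePath {k : ℕ} (Λ : KGraph k) where
  toFun : ∀ m n : Fin k → ℕ, m ≤ n → Λ.Path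
  d_eq : ∀ m n h, Λ.d (toFun m n h) = n - m
  src : ∀ m n h, Λ.s (toFun m n h) = toFun n n le_rfl
  rng : ∀ m n h, Λ.r (toFun m n h) = toFun m m le_rfl
  comp_eq : ∀ m n p (h1 : m ≤ n) (h2 : n ≤ p)
      (hc : Λ.s (toFun m n h1) = Λ.r (toFun n p h2)),
      Λ.comp (toFun m n h1) (toFun n p h2) hc = toFun m p (h1.trans h2)

namespace InfinitePath

variable {k : ℕ} {Λ : KGraph k}

/-- The shift map `σ^n` on the infinite-path space, `σ^n(x)(p,q) = x(n+p, n+q)`. -/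
def shift (x : InfinitePath Λ) (n : Fin k → ℕ) : InfinitePath Λ where
  toFun p q h := x.toFun (n + p) (n + q) (add_le_add le_rfl h)
  d_eq p q h := by
    rw [x.d_eq]
    funext i
    exact Nat.add_sub_add_left (n i) (q i) (p i)
  src p q h := x.src _ _ _
  rng p q h := x.rng _ _ _
  comp_eq p q t h1 h2 hc := x.comp_eq _ _ _ _ _ hc

/-- The range `r(x) = x(0,0)` of an infinite path. -/
def range (x : InfinitePath Λ) : Λ.Path := x.toFun 0 0 le_rfl

end InfinitePath

/-- `ExtEq Λ lam y x` says that `y = lam · x`, i.e. `y(0, d(lam)) = lam` and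
`σ^{d(lam)}(y) = x`.  (Such an extension is unique when it exists.) -/
def KGraph.ExtEq {k : ℕ} (Λ : KGraph k) (lam : Λ.Path) (y x : InfinitePath Λ) : Prop :=
  y.toFun 0 (Λ.d lam) (zero_le) = lam ∧ y.shift (Λ.d lam) = x

/-- `Λ.IsTheta m n μ ν` says that `μ ∈ Λ^m`, `ν ∈ Λ^n`, and `μx = νx` for every
infinite path `x ∈ Z(s(μ))`; i.e. `ν = θ_{m,n}(μ)`. -/
def KGraph.IsTheta {k : ℕ} (Λ : KGraph k) (m n : Fin k → ℕ) (μ ν : Λ.Path) : Prop :=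
  Λ.d μ = m ∧ Λ.d ν = n ∧
    ∀ x : InfinitePath Λ, x.range = Λ.s μ →
      ∃ y : InfinitePath Λ, Λ.ExtEq μ y x ∧ Λ.ExtEq ν y x

/-- The periodicity group `Per Λ = {m − n : σ^m(x) = σ^n(x) for all x ∈ Λ^∞} ⊆ ℤ^k`. -/
def KGraph.Per {k : ℕ} (Λ : KGraph k) : Set (Fin k → ℤ) :=
  {g | ∃ m n : Fin k → ℕ, (∀ i, (m i : ℤ) - n i = g i) ∧
      ∀ x : InfinitePath Λ, x.shift m = x.shift n}

/-- `Λ` is aperiodic if every vertex `v` admits `x ∈ Z(v)` with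
`σ^m(x) ≠ σ^n(x)` for all `m ≠ n` in `ℕ^k`. -/
def KGraph.Aperiodic {k : ℕ} (Λ : KGraph k) : Prop :=
  ∀ v : Λ.Path, Λ.d v = 0 → ∃ x : InfinitePath Λ, x.range = v ∧
    ∀ m n : Fin k → ℕ, m ≠ n → x.shift m ≠ x.shift n

namespace KGraph

variable {k : ℕ} (Λ : KGraph k)

/-- The factorization of a path at a given degree split. -/
noncomputable def split (lam : Λ.Path) (m n : Fin k → ℕ) (h : Λ.d lam = m + n) :
    Λ.Path × Λ.Path :=
  (Λ.factor lam m n h).choose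

lemma split_spec (lam : Λ.Path) (m n : Fin k → ℕ) (h : Λ.d lam = m + n) :
    ∃ hc : Λ.s (Λ.split lam m n h).1 = Λ.r (Λ.split lam m n h).2,
      Λ.d (Λ.split lam m n h).1 = m ∧ Λ.d (Λ.split lam m n h).2 = n ∧
      Λ.comp (Λ.split lam m n h).1 (Λ.split lam m n h).2 hc = lam :=
  (Λ.factor lam m n h).choose_spec.1

lemma split_unique (lam : Λ.Path) (m n : Fin k → ℕ) (h : Λ.d lam = m + n)
    {μ ν : Λ.Path} (hc : Λ.s μ = Λ.r ν) (hm : Λ.d μ = m)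
    (hcomp : Λ.comp μ ν hc = lam) :
    μ = (Λ.split lam m n h).1 ∧ ν = (Λ.split lam m n h).2 := by
  have hn : Λ.d ν = n := by
    have h2 : Λ.d lam = Λ.d μ + Λ.d ν := by rw [← hcomp, Λ.d_comp]
    have := h2.symm.trans h
    rw [hm] at this
    exact add_left_cancel this
  have := (Λ.factor lam m n h).choose_spec.2 (μ, ν) ⟨hc, hm, hn, hcomp⟩
  exact ⟨congrArg Prod.fst this, congrArg Prod.snd this⟩

/-- Unique factorization: two compositions with the same first degree agree. -/
lemma comp_cancel {μ ν μ' ν' : Λ.Path} (hc : Λ.s μ = Λ.r ν) (hc' : Λ.s μ' = Λ.r ν')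
    (hcomp : Λ.comp μ ν hc = Λ.comp μ' ν' hc') (hd : Λ.d μ = Λ.d μ') :
    μ = μ' ∧ ν = ν' := by
  have h : Λ.d (Λ.comp μ' ν' hc') = Λ.d μ' + Λ.d ν' := Λ.d_comp _ _ _
  have h1 := Λ.split_unique _ _ _ h hc hd hcomp
  have h2 := Λ.split_unique _ _ _ h hc' rfl rfl
  exact ⟨h1.1.trans h2.1.symm, h1.2.trans h2.2.symm⟩

lemma comp_assoc {μ ν τ : Λ.Path} (h1 : Λ.s μ = Λ.r ν) (h2 : Λ.s ν = Λ.r τ) :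
    Λ.comp (Λ.comp μ ν h1) τ (by rw [Λ.s_comp]; exact h2) =
      Λ.comp μ (Λ.comp ν τ h2) (by rw [Λ.r_comp]; exact h1) :=
  Λ.assoc μ ν τ h1 h2 _ _

lemma comp_congr {μ ν μ' ν' : Λ.Path} (hμ : μ = μ') (hν : ν = ν')
    (hc : Λ.s μ = Λ.r ν) (hc' : Λ.s μ' = Λ.r ν') :
    Λ.comp μ ν hc = Λ.comp μ' ν' hc' := by
  subst hμ; subst hν; rfl

end KGraph
namespace InfinitePath

variable {k : ℕ} {Λ : KGraph k}

lemma toFun_congr (x : InfinitePath Λ) {m n m' n' : Fin k → ℕ}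
    (hm : m = m') (hn : n = n') (h : m ≤ n) (h' : m' ≤ n') :
    x.toFun m n h = x.toFun m' n' h' := by subst hm; subst hn; rfl

lemma ext' {x y : InfinitePath Λ}
    (h : ∀ m n hh, x.toFun m n hh = y.toFun m n hh) : x = y := by
  cases x with
  | mk xf xd xs xr xc =>
    cases y with
    | mk yf yd ys yr yc =>
      have : xf = yf := by funext m n hh; exact h m n hh
      subst this
      rfl

lemma shift_shift (x : InfinitePath Λ) (a b : Fin k → ℕ) :
    (x.shift a).shift b = x.shift (a + b) := by
  apply ext'
  intro m n hh
  show x.toFun (a + (b + m)) (a + (b + n)) _ = x.toFun (a + b + m) (a + b + n) _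
  exact x.toFun_congr (by ring) (by ring) _ _

lemma shift_toFun (x : InfinitePath Λ) (p m n : Fin k → ℕ) (h : m ≤ n) :
    (x.shift p).toFun m n h = x.toFun (p + m) (p + n) (add_le_add le_rfl h) := rfl

/-- A segment of an infinite path is determined by a longer initial segment. -/
lemma seg_determined (z z' : InfinitePath Λ) (m n N : Fin k → ℕ)
    (h1 : m ≤ n) (h2 : n ≤ N)
    (hinit : z.toFun 0 N (zero_le) = z'.toFun 0 N (zero_le)) :
    z.toFun m n h1 = z'.toFun m n h1 := by
  have hmN : m ≤ N := h1.trans h2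
  have key : ∀ w : InfinitePath Λ, w.toFun 0 N (zero_le) = z.toFun 0 N (zero_le) →
      w.toFun m n h1 =
        (Λ.split (Λ.split (z.toFun 0 N (zero_le)) m (N - m)
            (by rw [z.d_eq]; rw [tsub_zero]; exact (add_tsub_cancel_of_le hmN).symm)).2
          (n - m) (N - n)
          (by
            obtain ⟨hc, hd1, hd2, hcomp⟩ := Λ.split_spec (z.toFun 0 N (zero_le)) m (N - m)
              (by rw [z.d_eq]; rw [tsub_zero]; exact (add_tsub_cancel_of_le hmN).symm)
            rw [hd2]; funext i
            have hx : m i ≤ n i := h1 i; have hy : n i ≤ N i := h2 i; simp only [Pi.sub_apply, Pi.add_apply]; omega)).1 := by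
    intro w hw
    -- w 0 N = w 0 m ⬝ w m N
    have e1 : Λ.comp (w.toFun 0 m (zero_le)) (w.toFun m N hmN)
        (by rw [w.src, w.rng]) = w.toFun 0 N (zero_le) :=
      w.comp_eq 0 m N (zero_le) hmN _
    rw [hw] at e1
    have u1 := Λ.split_unique (z.toFun 0 N (zero_le)) m (N - m)
      (by rw [z.d_eq]; rw [tsub_zero]; exact (add_tsub_cancel_of_le hmN).symm)
      _ (by rw [w.d_eq]; rw [tsub_zero]) e1
    -- w m N = w m n ⬝ w n N
    have e2 : Λ.comp (w.toFun m n h1) (w.toFun n N h2)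
        (by rw [w.src, w.rng]) = w.toFun m N hmN :=
      w.comp_eq m n N h1 h2 _
    rw [u1.2] at e2
    have hdsnd : Λ.d (Λ.split (z.toFun 0 N (zero_le)) m (N - m)
        (by rw [z.d_eq]; rw [tsub_zero]; exact (add_tsub_cancel_of_le hmN).symm)).2
        = (n - m) + (N - n) := by
      obtain ⟨hc, hd1, hd2, hcomp⟩ := Λ.split_spec (z.toFun 0 N (zero_le)) m (N - m)
        (by rw [z.d_eq]; rw [tsub_zero]; exact (add_tsub_cancel_of_le hmN).symm)
      rw [hd2]; funext i
      have hx : m i ≤ n i := h1 i; have hy : n i ≤ N i := h2 i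
      simp only [Pi.sub_apply, Pi.add_apply]; omega
    have u2 := Λ.split_unique _ (n - m) (N - n) hdsnd _ (by rw [w.d_eq]) e2
    exact u2.1
  rw [key z rfl, key z' hinit.symm]

end InfinitePath
namespace KGraph

variable {k : ℕ} {Λ : KGraph k}

/-- A coherent family of initial segments, from which an infinite path is built. -/
structure SegFamily (Λ : KGraph k) where
  f : (Fin k → ℕ) → Λ.Path
  hd : ∀ n, Λ.d (f n) = n
  hinit : ∀ m n, m ≤ n → ∃ (ν : Λ.Path) (hc : Λ.s (f m) = Λ.r ν),
    Λ.comp (f m) ν hc = f n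

namespace SegFamily

variable (F : SegFamily Λ)

lemma hdsplit (m n : Fin k → ℕ) (h : m ≤ n) : Λ.d (F.f n) = m + (n - m) := by
  rw [F.hd]; exact (add_tsub_cancel_of_le h).symm

/-- The segment of the family between `m` and `n`. -/
noncomputable def seg (m n : Fin k → ℕ) (h : m ≤ n) : Λ.Path :=
  (Λ.split (F.f n) m (n - m) (F.hdsplit m n h)).2

lemma seg_spec (m n : Fin k → ℕ) (h : m ≤ n) :
    ∃ hc : Λ.s (F.f m) = Λ.r (F.seg m n h),
      Λ.comp (F.f m) (F.seg m n h) hc = F.f n ∧ Λ.d (F.seg m n h) = n - m := by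
  obtain ⟨ν, hc, hcomp⟩ := F.hinit m n h
  obtain ⟨hu1, hu2⟩ := Λ.split_unique (F.f n) m (n - m) (F.hdsplit m n h) hc (F.hd m) hcomp
  have hseg : F.seg m n h = ν := hu2.symm
  refine ⟨by rw [hseg]; exact hc, ?_, ?_⟩
  · rw [Λ.comp_congr rfl hseg _ (by rw [hseg] at *; assumption)]
    exact hcomp
  · rw [hseg]
    have hdd : Λ.d (F.f n) = Λ.d (F.f m) + Λ.d ν := by rw [← hcomp, Λ.d_comp]
    rw [F.hd, F.hd] at hdd
    funext i
    have h2 := congrFun hdd i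
    have h3 : m i ≤ n i := h i
    simp only [Pi.add_apply] at h2
    simp only [Pi.sub_apply]
    omega

/-- Any valid decomposition identifies the segment. -/
lemma seg_unique (m n : Fin k → ℕ) (h : m ≤ n) {ν : Λ.Path}
    (hc : Λ.s (F.f m) = Λ.r ν) (hcomp : Λ.comp (F.f m) ν hc = F.f n) :
    ν = F.seg m n h :=
  (Λ.split_unique (F.f n) m (n - m) (F.hdsplit m n h) hc (F.hd m) hcomp).2

lemma seg_self (n : Fin k → ℕ) : F.seg n n le_rfl = Λ.s (F.f n) := by
  have hcv : Λ.s (F.f n) = Λ.r (Λ.s (F.f n)) := (Λ.r_vertex _ (Λ.d_s _)).symm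
  exact (F.seg_unique n n le_rfl hcv (Λ.comp_id (F.f n) hcv)).symm

/-- The infinite path determined by a coherent family of initial segments. -/
noncomputable def toInfinite : InfinitePath Λ where
  toFun m n h := F.seg m n h
  d_eq m n h := (F.seg_spec m n h).choose_spec.2
  src m n h := by
    show Λ.s (F.seg m n h) = F.seg n n le_rfl
    obtain ⟨hc, hcomp, hdeg⟩ := F.seg_spec m n h
    have : Λ.s (F.f n) = Λ.s (F.seg m n h) := by rw [← hcomp, Λ.s_comp]
    rw [← this, F.seg_self]
  rng m n h := by
    show Λ.r (F.seg m n h) = F.seg m m le_rfl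
    obtain ⟨hc, hcomp, hdeg⟩ := F.seg_spec m n h
    rw [← hc, F.seg_self]
  comp_eq m n p h1 h2 hcc := by
    show Λ.comp (F.seg m n h1) (F.seg n p h2) hcc = F.seg m p (h1.trans h2)
    obtain ⟨hc1, hcomp1, _⟩ := F.seg_spec m n h1
    obtain ⟨hc2, hcomp2, _⟩ := F.seg_spec n p h2
    apply F.seg_unique
    case hc => rw [Λ.r_comp]; exact hc1
    have h4 : Λ.s (Λ.comp (F.f m) (F.seg m n h1) hc1) = Λ.r (F.seg n p h2) := by
      rw [Λ.s_comp]; exact hcc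
    have assoc1 := Λ.assoc (F.f m) (F.seg m n h1) (F.seg n p h2) hc1 hcc h4
      (by rw [Λ.r_comp]; exact hc1)
    rw [← assoc1]
    rw [Λ.comp_congr hcomp1 rfl h4 hc2]
    exact hcomp2

lemma toInfinite_toFun (m n : Fin k → ℕ) (h : m ≤ n) :
    F.toInfinite.toFun m n h = F.seg m n h := rfl

lemma toInfinite_zero (n : Fin k → ℕ) : F.toInfinite.toFun 0 n (zero_le) = F.f n := by
  show F.seg 0 n (zero_le) = F.f n
  obtain ⟨hc, hcomp, hdeg⟩ := F.seg_spec 0 n (zero_le)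
  have hv : Λ.d (F.f 0) = 0 := F.hd 0
  have hr : F.f 0 = Λ.r (F.seg 0 n (zero_le)) := (Λ.s_vertex _ hv).symm.trans hc
  have hc' : Λ.s (Λ.r (F.seg 0 n (zero_le))) = Λ.r (F.seg 0 n (zero_le)) :=
    Λ.s_vertex _ (Λ.d_r _)
  calc F.seg 0 n (zero_le)
      = Λ.comp (Λ.r (F.seg 0 n (zero_le))) (F.seg 0 n (zero_le)) hc' :=
        (Λ.id_comp _ hc').symm
    _ = Λ.comp (F.f 0) (F.seg 0 n (zero_le)) hc := Λ.comp_congr hr.symm rfl hc' hc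
    _ = F.f n := hcomp

lemma toInfinite_range (h0 : Λ.d (F.f 0) = 0) : F.toInfinite.range = F.f 0 := by
  show F.seg 0 0 le_rfl = F.f 0
  rw [F.seg_self, Λ.s_vertex _ h0]

end SegFamily

end KGraph
namespace KGraph

variable {k : ℕ} {Λ : KGraph k}

section Cons

variable (lam : Λ.Path) (x : InfinitePath Λ) (hx : x.range = Λ.s lam)
include hx

lemma consHC (n : Fin k → ℕ) : Λ.s lam = Λ.r (x.toFun 0 n (zero_le)) := by
  rw [x.rng]; exact hx.symm

/-- `lam` composed with the initial segment of `x` of degree `n`. -/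
noncomputable def consA (n : Fin k → ℕ) : Λ.Path :=
  Λ.comp lam (x.toFun 0 n (zero_le)) (consHC lam x hx n)

lemma consHD (n : Fin k → ℕ) : Λ.d (consA lam x hx n) = n + Λ.d lam := by
  rw [consA, Λ.d_comp, x.d_eq, tsub_zero, add_comm]

/-- The initial segment of degree `n` of `lam ⬝ x`. -/
noncomputable def consF (n : Fin k → ℕ) : Λ.Path :=
  (Λ.split (consA lam x hx n) n (Λ.d lam) (consHD lam x hx n)).1

lemma consF_spec (n : Fin k → ℕ) :
    ∃ (g : Λ.Path) (hc : Λ.s (consF lam x hx n) = Λ.r g),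
      Λ.d (consF lam x hx n) = n ∧
      Λ.comp (consF lam x hx n) g hc = consA lam x hx n := by
  obtain ⟨hc, h1, h2, h3⟩ := Λ.split_spec (consA lam x hx n) n (Λ.d lam) (consHD lam x hx n)
  exact ⟨_, hc, h1, h3⟩

lemma consF_unique (n : Fin k → ℕ) {μ ν : Λ.Path} (hc : Λ.s μ = Λ.r ν)
    (hm : Λ.d μ = n) (hcomp : Λ.comp μ ν hc = consA lam x hx n) :
    μ = consF lam x hx n :=
  (Λ.split_unique (consA lam x hx n) n (Λ.d lam) (consHD lam x hx n) hc hm hcomp).1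

lemma consA_split (m n : Fin k → ℕ) (h : m ≤ n) :
    ∃ hc : Λ.s (consA lam x hx m) = Λ.r (x.toFun m n h),
      Λ.comp (consA lam x hx m) (x.toFun m n h) hc = consA lam x hx n := by
  have hc : Λ.s (consA lam x hx m) = Λ.r (x.toFun m n h) := by
    rw [consA, Λ.s_comp, x.src, x.rng]
  refine ⟨hc, ?_⟩
  have hcx : Λ.s (x.toFun 0 m (zero_le)) = Λ.r (x.toFun m n h) := by
    rw [x.src, x.rng]
  have e1 : Λ.comp (x.toFun 0 m (zero_le)) (x.toFun m n h) hcx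
      = x.toFun 0 n (zero_le) := x.comp_eq 0 m n (zero_le) h hcx
  have assoc1 := Λ.assoc lam (x.toFun 0 m (zero_le)) (x.toFun m n h)
    (consHC lam x hx m) hcx (by rw [Λ.s_comp]; exact hcx)
    (by rw [Λ.r_comp]; exact consHC lam x hx m)
  calc Λ.comp (consA lam x hx m) (x.toFun m n h) hc
      = Λ.comp lam (Λ.comp (x.toFun 0 m (zero_le)) (x.toFun m n h) hcx)
          (by rw [Λ.r_comp]; exact consHC lam x hx m) := assoc1
    _ = Λ.comp lam (x.toFun 0 n (zero_le)) (consHC lam x hx n) :=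
        Λ.comp_congr rfl e1 _ _
    _ = consA lam x hx n := rfl

/-- The coherent family of initial segments of `lam ⬝ x`. -/
noncomputable def consFam : SegFamily Λ where
  f := consF lam x hx
  hd n := by
    obtain ⟨g, hc, h1, h2⟩ := consF_spec lam x hx n
    exact h1
  hinit m n h := by
    obtain ⟨gm, hcm, hdm, hgm⟩ := consF_spec lam x hx m
    obtain ⟨gn, hcn, hdn, hgn⟩ := consF_spec lam x hx n
    -- split consF n at m
    have hdfn : Λ.d (consF lam x hx n) = m + (n - m) := by
      rw [hdn]; exact (add_tsub_cancel_of_le h).symm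
    obtain ⟨hcw, hdu, hdw, hcompw⟩ := Λ.split_spec (consF lam x hx n) m (n - m) hdfn
    set u := (Λ.split (consF lam x hx n) m (n - m) hdfn).1 with hu
    set w := (Λ.split (consF lam x hx n) m (n - m) hdfn).2 with hw
    -- consA n = u ⬝ (w ⬝ gn)
    have hcwg : Λ.s w = Λ.r gn := by rw [← hcompw, Λ.s_comp] at hcn; exact hcn
    have assoc2 := Λ.assoc u w gn hcw hcwg
      (by rw [Λ.s_comp]; exact hcwg) (by rw [Λ.r_comp]; exact hcw)
    have e2 : Λ.comp (Λ.comp u w hcw) gn (by rw [Λ.s_comp]; exact hcwg)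
        = consA lam x hx n := by
      rw [Λ.comp_congr hcompw rfl _ hcn]; exact hgn
    -- consA n = consF m ⬝ (gm ⬝ x(m,n))
    obtain ⟨hcA, hcompA⟩ := consA_split lam x hx m n h
    have hcmx : Λ.s gm = Λ.r (x.toFun m n h) := by
      rw [← hgm, Λ.s_comp] at hcA; exact hcA
    have assoc3 := Λ.assoc (consF lam x hx m) gm (x.toFun m n h) hcm hcmx
      (by rw [Λ.s_comp]; exact hcmx) (by rw [Λ.r_comp]; exact hcm)
    have e3 : Λ.comp (Λ.comp (consF lam x hx m) gm hcm) (x.toFun m n h)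
        (by rw [Λ.s_comp]; exact hcmx) = consA lam x hx n := by
      rw [Λ.comp_congr hgm rfl _ hcA]; exact hcompA
    -- compare the two degree-m factorizations of consA n
    have hcancel := Λ.comp_cancel (by rw [Λ.r_comp]; exact hcw)
      (by rw [Λ.r_comp]; exact hcm)
      ((assoc2.symm.trans e2).trans ((assoc3.symm.trans e3)).symm)
      (by rw [hdu, hdm])
    have huf : u = consF lam x hx m := hcancel.1
    refine ⟨w, ?_, ?_⟩
    case refine_1 => rw [← huf]; exact hcw
    rw [Λ.comp_congr huf.symm rfl _ hcw]
    exact hcompw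

end Cons

end KGraph

namespace KGraph

variable {k : ℕ} {Λ : KGraph k}

section Cons2

variable (lam : Λ.Path) (x : InfinitePath Λ) (hx : x.range = Λ.s lam)
include hx

/-- The infinite path `lam ⬝ x`. -/
noncomputable def cons : InfinitePath Λ := (consFam lam x hx).toInfinite

lemma consF_add (n : Fin k → ℕ) :
    consF lam x hx (Λ.d lam + n) = consA lam x hx n := by
  obtain ⟨hc, hcomp⟩ := consA_split lam x hx n (Λ.d lam + n) le_add_self
  exact (consF_unique lam x hx (Λ.d lam + n) hc
    (by rw [consHD]; exact add_comm _ _) hcomp).symm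

lemma cons_init : (cons lam x hx).toFun 0 (Λ.d lam) (zero_le) = lam := by
  rw [cons, (consFam lam x hx).toInfinite_zero]
  show consF lam x hx (Λ.d lam) = lam
  exact (consF_unique lam x hx (Λ.d lam) (consHC lam x hx (Λ.d lam)) rfl rfl).symm

lemma cons_range : (cons lam x hx).range = Λ.r lam := by
  rw [cons, SegFamily.toInfinite_range _ ((consFam lam x hx).hd 0)]
  show consF lam x hx 0 = Λ.r lam
  have hidc : Λ.s (Λ.r (consA lam x hx 0)) = Λ.r (consA lam x hx 0) :=
    Λ.s_vertex _ (Λ.d_r _)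
  have h := Λ.id_comp (consA lam x hx 0) hidc
  have h2 := consF_unique lam x hx 0 hidc (Λ.d_r _) h
  rw [← h2, consA, Λ.r_comp]

lemma cons_shift : (cons lam x hx).shift (Λ.d lam) = x := by
  apply InfinitePath.ext'
  intro a b h
  obtain ⟨hc, hcomp⟩ := consA_split lam x hx a b h
  have hc2 : Λ.s (consF lam x hx (Λ.d lam + a)) = Λ.r (x.toFun a b h) := by
    rw [consF_add]; exact hc
  have hcomp2 : Λ.comp (consF lam x hx (Λ.d lam + a)) (x.toFun a b h) hc2
      = consF lam x hx (Λ.d lam + b) := by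
    rw [Λ.comp_congr (consF_add lam x hx a) rfl hc2 hc, hcomp, ← consF_add lam x hx b]
  have := (SegFamily.seg_unique (consFam lam x hx) (Λ.d lam + a) (Λ.d lam + b)
    (add_le_add le_rfl h) hc2 hcomp2).symm
  exact this.symm.symm

end Cons2

end KGraph
namespace KGraph

variable {k : ℕ} {Λ : KGraph k}

lemma edge_out (hsc : Λ.StronglyConnected) (w : Λ.Path) (hw : Λ.d w = 0) (i : Fin k) :
    ∃ α : Λ.Path, Λ.r α = w ∧ Λ.d α = Pi.single i 1 := by
  obtain ⟨f, hf⟩ := Λ.edge_nonempty i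
  obtain ⟨τ, hτr, hτs⟩ := hsc w (Λ.r f) hw (Λ.d_r f)
  have hc : Λ.s τ = Λ.r f := hτs
  have hd : Λ.d (Λ.comp τ f hc) = Pi.single i 1 + Λ.d τ := by
    rw [Λ.d_comp, hf, add_comm]
  obtain ⟨hcs, hd1, hd2, hcomp⟩ := Λ.split_spec (Λ.comp τ f hc) (Pi.single i 1) (Λ.d τ) hd
  refine ⟨(Λ.split _ _ _ hd).1, ?_, hd1⟩
  have h2 : Λ.r (Λ.comp _ _ hcs) = Λ.r (Λ.comp τ f hc) := by rw [hcomp]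
  rw [Λ.r_comp, Λ.r_comp] at h2
  rw [h2, hτr]

lemma path_out (hsc : Λ.StronglyConnected) :
    ∀ N : ℕ, ∀ n : Fin k → ℕ, Finset.univ.sum n = N →
    ∀ w : Λ.Path, Λ.d w = 0 → ∃ δ : Λ.Path, Λ.r δ = w ∧ Λ.d δ = n := by
  intro N
  induction N with
  | zero =>
    intro n hn w hw
    have : n = 0 := by
      funext i
      exact (Finset.sum_eq_zero_iff.mp hn) i (Finset.mem_univ i)
    exact ⟨w, Λ.r_vertex w hw, by rw [hw, this]⟩
  | succ N ih =>
    intro n hn w hw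
    have hex : ∃ i, n i ≠ 0 := by
      by_contra hcon
      push_neg at hcon
      rw [show n = 0 from funext fun i => hcon i] at hn
      simp at hn
    obtain ⟨i, hi⟩ := hex
    obtain ⟨α, hαr, hαd⟩ := edge_out hsc w hw i
    set n' : Fin k → ℕ := Function.update n i (n i - 1) with hn'
    have hsum : Finset.univ.sum n' = N := by
      rw [hn', Finset.sum_update_of_mem (Finset.mem_univ i)]
      rw [← Finset.add_sum_erase Finset.univ n (Finset.mem_univ i)] at hn
      rw [← Finset.erase_eq]
      omega
    obtain ⟨δ', hδr, hδd⟩ := ih n' hsum (Λ.s α) (Λ.d_s α)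
    have hcd : Λ.s α = Λ.r δ' := hδr.symm
    refine ⟨Λ.comp α δ' hcd, by rw [Λ.r_comp, hαr], ?_⟩
    rw [Λ.d_comp, hαd, hδd]
    funext j
    by_cases hji : j = i
    · subst hji
      simp [hn']
      omega
    · simp [hn', hji, Function.update_of_ne hji, Pi.single_eq_of_ne hji]

/-- Every vertex emits a path of every degree. -/
lemma path_out' (hsc : Λ.StronglyConnected) (n : Fin k → ℕ) (w : Λ.Path) (hw : Λ.d w = 0) :
    ∃ δ : Λ.Path, Λ.r δ = w ∧ Λ.d δ = n :=
  path_out hsc _ n rfl w hw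

end KGraph
namespace KGraph

variable {k : ℕ} {Λ : KGraph k}

lemma exists_disagree (hper : Λ.Per = {0}) {p q : Fin k → ℕ} (hpq : p ≠ q) :
    ∃ y : InfinitePath Λ, y.shift p ≠ y.shift q := by
  by_contra hcon
  push_neg at hcon
  have hmem : (fun i => (p i : ℤ) - q i) ∈ Λ.Per := ⟨p, q, fun i => rfl, hcon⟩
  rw [hper] at hmem
  apply hpq
  funext i
  have := congrFun hmem i
  simp only [Pi.zero_apply] at this
  omega

/-- Claim A: if some infinite path witnesses `σ^p ≠ σ^q`, then above any finite path
there is an infinite path witnessing `σ^p ≠ σ^q`. -/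
lemma claimA (hsc : Λ.StronglyConnected) (p q : Fin k → ℕ)
    (hex : ∃ y : InfinitePath Λ, y.shift p ≠ y.shift q) (μ : Λ.Path) :
    ∃ z : InfinitePath Λ, z.toFun 0 (Λ.d μ) (zero_le) = μ ∧ z.shift p ≠ z.shift q := by
  by_contra hcon
  push_neg at hcon
  obtain ⟨y, hy⟩ := hex
  apply hy
  have hyv : Λ.d y.range = 0 := by
    rw [InfinitePath.range, y.d_eq]; simp
  obtain ⟨α, hαr, hαs⟩ := hsc (Λ.s μ) y.range (Λ.d_s μ) hyv
  have hx1 : y.range = Λ.s α := hαs.symm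
  have hz1r : (cons α y hx1).range = Λ.s μ := by rw [cons_range α y hx1, hαr]
  set z := cons μ (cons α y hx1) hz1r with hz
  have hinit : z.toFun 0 (Λ.d μ) (zero_le) = μ := cons_init μ _ hz1r
  have hzshift := hcon z hinit
  have h1 : z.shift (Λ.d μ) = cons α y hx1 := cons_shift μ _ hz1r
  have h2 : (cons α y hx1).shift (Λ.d α) = y := cons_shift α y hx1
  have hy2 : z.shift (Λ.d μ + Λ.d α) = y := by
    rw [← InfinitePath.shift_shift, h1, h2]
  rw [← hy2, InfinitePath.shift_shift, InfinitePath.shift_shift, add_comm _ p, add_comm _ q,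
    ← InfinitePath.shift_shift z p, ← InfinitePath.shift_shift z q]
  exact congrArg (fun w : InfinitePath Λ => w.shift (Λ.d μ + Λ.d α)) hzshift

/-- The extension step: any finite path can be extended (strictly in every coordinate)
so that every infinite path through the extension witnesses `σ^p ≠ σ^q`. -/
lemma step (hsc : Λ.StronglyConnected)
    (hshift : ∀ p q : Fin k → ℕ, p ≠ q → ∃ y : InfinitePath Λ, y.shift p ≠ y.shift q)
    (μ : Λ.Path) (p q : Fin k → ℕ) :
    ∃ μ' : Λ.Path, (∃ (γ : Λ.Path) (hc : Λ.s μ = Λ.r γ), Λ.comp μ γ hc = μ') ∧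
      Λ.d μ + 1 ≤ Λ.d μ' ∧
      (p ≠ q → ∀ z : InfinitePath Λ,
        z.toFun 0 (Λ.d μ') (zero_le) = μ' → z.shift p ≠ z.shift q) := by
  by_cases hpq : p = q
  · -- just extend by a path of degree 1
    obtain ⟨δ, hδr, hδd⟩ := path_out' hsc 1 (Λ.s μ) (Λ.d_s μ)
    refine ⟨Λ.comp μ δ hδr.symm, ⟨δ, hδr.symm, rfl⟩, ?_, fun h => absurd hpq h⟩
    rw [Λ.d_comp, hδd]
  · obtain ⟨z, hzinit, hzne⟩ := claimA hsc p q (hshift p q hpq) μ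
    -- find a finite disagreement
    have hfin : ∃ (a b : Fin k → ℕ) (hab : a ≤ b),
        z.toFun (p + a) (p + b) (add_le_add le_rfl hab) ≠
        z.toFun (q + a) (q + b) (add_le_add le_rfl hab) := by
      by_contra hcon
      push_neg at hcon
      exact hzne (InfinitePath.ext' fun a b hab => hcon a b hab)
    obtain ⟨a, b, hab, hne⟩ := hfin
    set N : Fin k → ℕ := Λ.d μ + (p + b) + (q + b) + 1 with hN
    have hμN : Λ.d μ ≤ N := fun i => by simp only [hN, Pi.add_apply]; omega
    have hpbN : p + b ≤ N := fun i => by simp only [hN, Pi.add_apply]; omega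
    have hqbN : q + b ≤ N := fun i => by simp only [hN, Pi.add_apply]; omega
    have hc2 : Λ.s (z.toFun 0 (Λ.d μ) (zero_le)) = Λ.r (z.toFun (Λ.d μ) N hμN) := by
      rw [z.src, z.rng]
    have hcμ : Λ.s μ = Λ.r (z.toFun (Λ.d μ) N hμN) :=
      ((congrArg Λ.s hzinit).symm.trans hc2)
    refine ⟨z.toFun 0 N (zero_le), ?_, ?_, ?_⟩
    · exact ⟨z.toFun (Λ.d μ) N hμN, hcμ,
        (Λ.comp_congr hzinit.symm rfl hcμ hc2).trans (z.comp_eq 0 (Λ.d μ) N (zero_le) hμN hc2)⟩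
    · rw [z.d_eq, tsub_zero]
      intro i
      simp only [hN, Pi.add_apply, Pi.one_apply]
      omega
    · intro _ z' hz'
      have hdet : ∀ (m n : Fin k → ℕ) (h1 : m ≤ n), n ≤ N →
          z'.toFun m n h1 = z.toFun m n h1 := by
        intro m n h1 h2
        refine InfinitePath.seg_determined z' z m n N h1 h2 ?_
        exact ((z'.toFun_congr (rfl : (0 : Fin k → ℕ) = 0)
          (by rw [z.d_eq, tsub_zero] : Λ.d (z.toFun 0 N (zero_le)) = N) (zero_le)
          (zero_le)).symm).trans hz'  
      intro heq
      apply hne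
      have e1 : z'.toFun (p + a) (p + b) (add_le_add le_rfl hab) =
          z'.toFun (q + a) (q + b) (add_le_add le_rfl hab) := by
        have := congrArg (fun w : InfinitePath Λ => w.toFun a b hab) heq
        exact this
      rw [← hdet _ _ _ hpbN, ← hdet _ _ _ hqbN]
      exact e1

end KGraph
namespace KGraph

variable {k : ℕ} {Λ : KGraph k}

/-- The initial segment of degree `n` of a path. -/
noncomputable def initSeg (lam : Λ.Path) (n : Fin k → ℕ) (h : n ≤ Λ.d lam) : Λ.Path :=
  (Λ.split lam n (Λ.d lam - n) (add_tsub_cancel_of_le h).symm).1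

lemma initSeg_spec (lam : Λ.Path) (n : Fin k → ℕ) (h : n ≤ Λ.d lam) :
    Λ.d (initSeg lam n h) = n ∧ ∃ (g : Λ.Path) (hc : Λ.s (initSeg lam n h) = Λ.r g),
      Λ.comp (initSeg lam n h) g hc = lam := by
  obtain ⟨hc, h1, h2, h3⟩ := Λ.split_spec lam n (Λ.d lam - n) (add_tsub_cancel_of_le h).symm
  exact ⟨h1, _, hc, h3⟩

lemma initSeg_unique (lam : Λ.Path) (n : Fin k → ℕ) (h : n ≤ Λ.d lam)
    {μ ν : Λ.Path} (hc : Λ.s μ = Λ.r ν) (hm : Λ.d μ = n)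
    (hcomp : Λ.comp μ ν hc = lam) : μ = initSeg lam n h :=
  (Λ.split_unique lam n (Λ.d lam - n) (add_tsub_cancel_of_le h).symm hc hm hcomp).1

lemma initSeg_self (lam : Λ.Path) (h : Λ.d lam ≤ Λ.d lam) :
    initSeg lam (Λ.d lam) h = lam := by
  have hc : Λ.s lam = Λ.r (Λ.s lam) := (Λ.r_vertex _ (Λ.d_s _)).symm
  exact (initSeg_unique lam (Λ.d lam) h hc rfl (Λ.comp_id lam hc)).symm

lemma initSeg_comp (μ γ : Λ.Path) (hc : Λ.s μ = Λ.r γ) (n : Fin k → ℕ)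
    (h : n ≤ Λ.d μ) (h' : n ≤ Λ.d (Λ.comp μ γ hc)) :
    initSeg (Λ.comp μ γ hc) n h' = initSeg μ n h := by
  obtain ⟨hd1, g, hcg, hcomp⟩ := initSeg_spec μ n h
  have hgγ : Λ.s g = Λ.r γ := by rw [← hcomp, Λ.s_comp] at hc; exact hc
  have assoc1 := Λ.assoc (initSeg μ n h) g γ hcg hgγ
    (by rw [Λ.s_comp]; exact hgγ) (by rw [Λ.r_comp]; exact hcg)
  have e1 : Λ.comp (Λ.comp (initSeg μ n h) g hcg) γ (by rw [Λ.s_comp]; exact hgγ)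
      = Λ.comp μ γ hc := Λ.comp_congr hcomp rfl _ hc
  exact (initSeg_unique (Λ.comp μ γ hc) n h' _ hd1 (assoc1.symm.trans e1)).symm

lemma initSeg_nested (lam : Λ.Path) (m n : Fin k → ℕ) (hmn : m ≤ n) (hn : n ≤ Λ.d lam) :
    ∃ (ν : Λ.Path) (hc : Λ.s (initSeg lam m (hmn.trans hn)) = Λ.r ν),
      Λ.comp (initSeg lam m (hmn.trans hn)) ν hc = initSeg lam n hn := by
  obtain ⟨hdn, gn, hcn, hcompn⟩ := initSeg_spec lam n hn
  have hdfn : Λ.d (initSeg lam n hn) = m + (n - m) := by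
    rw [hdn]; exact (add_tsub_cancel_of_le hmn).symm
  obtain ⟨hcw, hdu, hdw, hcompw⟩ := Λ.split_spec (initSeg lam n hn) m (n - m) hdfn
  set u := (Λ.split (initSeg lam n hn) m (n - m) hdfn).1
  set w := (Λ.split (initSeg lam n hn) m (n - m) hdfn).2
  have hcwg : Λ.s w = Λ.r gn := by rw [← hcompw, Λ.s_comp] at hcn; exact hcn
  have assoc2 := Λ.assoc u w gn hcw hcwg
    (by rw [Λ.s_comp]; exact hcwg) (by rw [Λ.r_comp]; exact hcw)
  have e2 : Λ.comp (Λ.comp u w hcw) gn (by rw [Λ.s_comp]; exact hcwg) = lam := by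
    rw [Λ.comp_congr hcompw rfl _ hcn]; exact hcompn
  have huf : u = initSeg lam m (hmn.trans hn) :=
    initSeg_unique lam m (hmn.trans hn) (by rw [Λ.r_comp]; exact hcw) hdu
      (assoc2.symm.trans e2)
  refine ⟨w, ?_, ?_⟩
  case refine_1 => rw [← huf]; exact hcw
  rw [Λ.comp_congr huf.symm rfl _ hcw]
  exact hcompw

end KGraph
namespace KGraph

variable {k : ℕ} {Λ : KGraph k}

section Chain

variable (hsc : Λ.StronglyConnected)
  (hshift : ∀ p q : Fin k → ℕ, p ≠ q → ∃ y : InfinitePath Λ, y.shift p ≠ y.shift q)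
  (v : Λ.Path) (e : ℕ → (Fin k → ℕ) × (Fin k → ℕ))

/-- The recursively constructed chain of finite paths catching all disagreements. -/
noncomputable def chain : ℕ → Λ.Path
  | 0 => v
  | j + 1 => (step hsc hshift (chain j) (e j).1 (e j).2).choose

lemma chain_succ_spec (j : ℕ) :
    (∃ (γ : Λ.Path) (hc : Λ.s (chain hsc hshift v e j) = Λ.r γ),
      Λ.comp (chain hsc hshift v e j) γ hc = chain hsc hshift v e (j + 1)) ∧
    Λ.d (chain hsc hshift v e j) + 1 ≤ Λ.d (chain hsc hshift v e (j + 1)) ∧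
    ((e j).1 ≠ (e j).2 → ∀ z : InfinitePath Λ,
      z.toFun 0 (Λ.d (chain hsc hshift v e (j + 1))) (zero_le) = chain hsc hshift v e (j + 1) →
      z.shift (e j).1 ≠ z.shift (e j).2) :=
  (step hsc hshift (chain hsc hshift v e j) (e j).1 (e j).2).choose_spec

lemma chain_r (hv : Λ.d v = 0) : ∀ j, Λ.r (chain hsc hshift v e j) = v := by
  intro j
  induction j with
  | zero => exact Λ.r_vertex v hv
  | succ j ih =>
    obtain ⟨⟨γ, hc, hcomp⟩, _, _⟩ := chain_succ_spec hsc hshift v e j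
    rw [← hcomp, Λ.r_comp, ih]

lemma chain_d : ∀ j, (fun _ => (j : ℕ)) ≤ Λ.d (chain hsc hshift v e j) := by
  intro j
  induction j with
  | zero => intro i; exact Nat.zero_le _
  | succ j ih =>
    obtain ⟨_, hd, _⟩ := chain_succ_spec hsc hshift v e j
    intro i
    have h1 : Λ.d (chain hsc hshift v e j) i + 1 ≤ Λ.d (chain hsc hshift v e (j + 1)) i := by
      have := hd i
      simpa using this
    have h2 : j ≤ Λ.d (chain hsc hshift v e j) i := ih i
    show j + 1 ≤ Λ.d (chain hsc hshift v e (j + 1)) i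
    omega

lemma chain_ext : ∀ j j', j ≤ j' →
    ∃ (γ : Λ.Path) (hc : Λ.s (chain hsc hshift v e j) = Λ.r γ),
      Λ.comp (chain hsc hshift v e j) γ hc = chain hsc hshift v e j' := by
  intro j j' hj
  induction j' , hj using Nat.le_induction with
  | base =>
    have hc : Λ.s (chain hsc hshift v e j) = Λ.r (Λ.s (chain hsc hshift v e j)) :=
      (Λ.r_vertex _ (Λ.d_s _)).symm
    exact ⟨_, hc, Λ.comp_id _ hc⟩
  | succ j' hjj ih =>
    obtain ⟨γ, hc, hcomp⟩ := ih
    obtain ⟨⟨γ', hc', hcomp'⟩, _, _⟩ := chain_succ_spec hsc hshift v e j'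
    have hγγ : Λ.s γ = Λ.r γ' := by rw [← hcomp, Λ.s_comp] at hc'; exact hc'
    have assoc1 := Λ.assoc (chain hsc hshift v e j) γ γ' hc hγγ
      (by rw [Λ.s_comp]; exact hγγ) (by rw [Λ.r_comp]; exact hc)
    refine ⟨Λ.comp γ γ' hγγ, by rw [Λ.r_comp]; exact hc, ?_⟩
    rw [← assoc1, Λ.comp_congr hcomp rfl _ hc']
    exact hcomp'

lemma initSeg_congr {lam lam' : Λ.Path} (hll : lam = lam') (n : Fin k → ℕ)
    (hl : n ≤ Λ.d lam) (hl' : n ≤ Λ.d lam') :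
    initSeg lam n hl = initSeg lam' n hl' := by subst hll; rfl

include hsc hshift in
/-- Main construction: an aperiodic infinite path based at any vertex. -/
lemma exists_aperiodic_path [Nonempty (Fin k)] (hv : Λ.d v = 0)
    (he : Function.Surjective e) :
    ∃ x : InfinitePath Λ, x.range = v ∧
      ∀ p q : Fin k → ℕ, p ≠ q → x.shift p ≠ x.shift q := by
  have hMd : ∀ n : Fin k → ℕ, n ≤ Λ.d (chain hsc hshift v e (Finset.univ.sup n)) := by
    intro n i
    exact le_trans (Finset.le_sup (Finset.mem_univ i))
      (chain_d hsc hshift v e (Finset.univ.sup n) i)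
  set F : SegFamily Λ :=
    { f := fun n => initSeg (chain hsc hshift v e (Finset.univ.sup n)) n (hMd n)
      hd := fun n => (initSeg_spec _ n (hMd n)).1
      hinit := by
        intro m n h
        have hMm : Finset.univ.sup m ≤ Finset.univ.sup n :=
          Finset.sup_mono_fun (fun i _ => h i)
        obtain ⟨γ, hc, hcomp⟩ := chain_ext hsc hshift v e _ _ hMm
        have e1 : initSeg (chain hsc hshift v e (Finset.univ.sup n)) m (h.trans (hMd n))
            = initSeg (chain hsc hshift v e (Finset.univ.sup m)) m (hMd m) := by
          refine (initSeg_congr hcomp.symm m (h.trans (hMd n))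
            (by rw [hcomp]; exact h.trans (hMd n))).trans ?_
          exact initSeg_comp _ _ hc m (hMd m) _
        obtain ⟨ν, hc', hcomp'⟩ := initSeg_nested
          (chain hsc hshift v e (Finset.univ.sup n)) m n h (hMd n)
        rw [e1] at hc'
        refine ⟨ν, hc', ?_⟩
        refine (Λ.comp_congr e1.symm rfl hc' ?_).trans hcomp'
        rw [e1]; exact hc' } with hF
  have hf0 : F.f 0 = v := by
    have hd0 : Λ.d (F.f 0) = 0 := F.hd 0
    obtain ⟨_, g, hcg, hcompg⟩ := initSeg_spec (chain hsc hshift v e (Finset.univ.sup 0)) 0 (hMd 0)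
    have hr0 : Λ.r (F.f 0) = v := by
      show Λ.r (initSeg (chain hsc hshift v e (Finset.univ.sup 0)) 0 (hMd 0)) = v
      rw [← Λ.r_comp _ _ hcg, hcompg, chain_r hsc hshift v e hv]
    rw [← hr0, Λ.r_vertex _ hd0]
  refine ⟨F.toInfinite, by rw [F.toInfinite_range (by rw [hf0]; exact hv), hf0], ?_⟩
  have x_init : ∀ j, F.toInfinite.toFun 0 (Λ.d (chain hsc hshift v e j)) (zero_le)
      = chain hsc hshift v e j := by
    intro j
    rw [F.toInfinite_zero]
    set N : Fin k → ℕ := Λ.d (chain hsc hshift v e j) with hNdef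
    have i0 : Fin k := Classical.arbitrary (Fin k)
    have hj : j ≤ Finset.univ.sup N := by
      refine le_trans ?_ (Finset.le_sup (f := N) (Finset.mem_univ i0))
      exact chain_d hsc hshift v e j i0
    obtain ⟨γ, hc, hcomp⟩ := chain_ext hsc hshift v e j _ hj
    show initSeg (chain hsc hshift v e (Finset.univ.sup N)) N (hMd N)
      = chain hsc hshift v e j
    calc initSeg (chain hsc hshift v e (Finset.univ.sup N)) N (hMd N)
        = initSeg (Λ.comp (chain hsc hshift v e j) γ hc) N (by rw [hcomp]; exact hMd N) :=
          initSeg_congr hcomp.symm N (hMd N) (by rw [hcomp]; exact hMd N)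
      _ = initSeg (chain hsc hshift v e j) N le_rfl := initSeg_comp _ _ hc N le_rfl _
      _ = chain hsc hshift v e j := initSeg_self _ le_rfl
  intro p q hpq
  obtain ⟨j, hj⟩ := he (p, q)
  obtain ⟨_, _, hcatch⟩ := chain_succ_spec hsc hshift v e j
  have h1 : (e j).1 = p := by rw [hj]
  have h2 : (e j).2 = q := by rw [hj]
  rw [h1, h2] at hcatch
  exact hcatch hpq F.toInfinite (x_init (j + 1))

end Chain

/-- In a `0`-graph every vertex carries an infinite path. -/
lemma exists_path_isEmpty [IsEmpty (Fin k)] (v : Λ.Path) (hv : Λ.d v = 0) :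
    ∃ x : InfinitePath Λ, x.range = v := by
  have hc0 : Λ.s v = Λ.r (Λ.s v) := (Λ.r_vertex _ (Λ.d_s _)).symm
  set F : SegFamily Λ :=
    { f := fun _ => v
      hd := fun n => by rw [hv]; exact (Subsingleton.elim _ _)
      hinit := fun m n h => ⟨Λ.s v, hc0, Λ.comp_id v hc0⟩ }
  exact ⟨F.toInfinite, by rw [F.toInfinite_range hv]⟩

end KGraph
/-- A strongly connected finite `k`-graph is aperiodic iff `Per Λ = {0}`. -/
theorem aperiodic_iff_per_trivial {k : ℕ} (Λ : KGraph k)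
    (hfin : Λ.IsFinite) (hsc : Λ.StronglyConnected) :
    Λ.Aperiodic ↔ Λ.Per = {0} := by
  constructor
  · intro hap
    ext g
    simp only [Set.mem_singleton_iff]
    constructor
    · rintro ⟨m, n, hg, hx⟩
      by_cases hmn : m = n
      · subst hmn
        funext i
        rw [← hg i]
        simp
      · exfalso
        have : ∃ i, m i ≠ n i := Function.ne_iff.mp hmn
        obtain ⟨i, _⟩ := this
        obtain ⟨lam, _⟩ := Λ.edge_nonempty i
        obtain ⟨x, hxr, hxap⟩ := hap (Λ.r lam) (Λ.d_r lam)
        exact hxap m n hmn (hx x)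
    · rintro rfl
      exact ⟨0, 0, fun i => by simp, fun x => rfl⟩
  · intro hper v hv
    rcases isEmpty_or_nonempty (Fin k) with hE | hN
    · obtain ⟨x, hxr⟩ := KGraph.exists_path_isEmpty v hv
      exact ⟨x, hxr, fun m n hmn => absurd (Subsingleton.elim m n) hmn⟩
    · obtain ⟨e, he⟩ := exists_surjective_nat ((Fin k → ℕ) × (Fin k → ℕ))
      exact KGraph.exists_aperiodic_path hsc
        (fun p q hpq => KGraph.exists_disagree hper hpq) v e hv he
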